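/- arXiv:2205.14192 — 7 statements merged into one kernel-verified Lean document; each statement's English description precedes it below -/
import Mathlib

section
/- Let K ⊆ ℝⁿ be a polyhedron (a finite intersection of closed half-spaces) with nonempty interior. Then there exist ε > 0 and δ > 0 such that for every x ∈ K there exists x₀ ∈ K with ‖x − x₀‖ ≤ δ and {y ∈ ℝⁿ : ‖y − x₀‖ < ε} ⊆ K. -/
open Set
open scoped InnerProductSpace

/-- A form of Gordan's lemma: if the vectors `a i`, `i ∈ I`, all have positive inner
product with some vector `w`, then there is a vector `v` with `⟪a i, v⟫ ≤ -1` for all `i ∈ I`. -/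
lemma gordan_aux {n m : ℕ} (a : Fin m → EuclideanSpace ℝ (Fin n)) (I : Finset (Fin m))
    (w : EuclideanSpace ℝ (Fin n)) (hw : ∀ i ∈ I, 0 < ⟪a i, w⟫_ℝ) :
    ∃ v : EuclideanSpace ℝ (Fin n), ∀ i ∈ I, ⟪a i, v⟫_ℝ ≤ -1 := by
  classical
  set s : Finset (EuclideanSpace ℝ (Fin n)) := I.image a with hs
  have hws : ∀ y ∈ s, 0 < ⟪y, w⟫_ℝ := by
    intro y hy
    obtain ⟨i, hi, rfl⟩ := Finset.mem_image.1 hy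
    exact hw i hi
  have h0 : (0 : EuclideanSpace ℝ (Fin n)) ∉ convexHull ℝ (↑s : Set (EuclideanSpace ℝ (Fin n))) := by
    intro hmem
    rw [Finset.convexHull_eq] at hmem
    obtain ⟨wt, hwt0, hwt1, hcm⟩ := hmem
    rw [Finset.centerMass_eq_of_sum_1 _ _ hwt1] at hcm
    have hsne : s.Nonempty := by
      rcases Finset.eq_empty_or_nonempty s with h | h
      · rw [h] at hwt1; simp at hwt1
      · exact h
    have hpos : (0 : ℝ) < ∑ y ∈ s, wt y * ⟪y, w⟫_ℝ := by
      refine Finset.sum_pos' (fun y hy => mul_nonneg (hwt0 y hy) (hws y hy).le) ?_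
      obtain ⟨y₀, hy₀, hwy₀⟩ : ∃ y ∈ s, 0 < wt y := by
        by_contra h
        push_neg at h
        have : ∑ y ∈ s, wt y ≤ 0 := Finset.sum_nonpos h
        linarith
      exact ⟨y₀, hy₀, mul_pos hwy₀ (hws y₀ hy₀)⟩
    have hz : ∑ y ∈ s, wt y * ⟪y, w⟫_ℝ = 0 := by
      have : ⟪∑ y ∈ s, wt y • id y, w⟫_ℝ = ∑ y ∈ s, wt y * ⟪y, w⟫_ℝ := by
        rw [sum_inner]
        exact Finset.sum_congr rfl fun y _ => real_inner_smul_left _ _ _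
      rw [hcm] at this
      rw [← this, inner_zero_left]
    linarith
  have hclosed : IsClosed (convexHull ℝ (↑s : Set (EuclideanSpace ℝ (Fin n)))) :=
    (s.finite_toSet.isCompact_convexHull ℝ).isClosed
  obtain ⟨f, u, hfu, hu⟩ :=
    geometric_hahn_banach_closed_point (convex_convexHull ℝ (↑s : Set (EuclideanSpace ℝ (Fin n)))) hclosed h0
  have hu0 : u < 0 := by simpa using hu
  refine ⟨(-u)⁻¹ • (InnerProductSpace.toDual ℝ (EuclideanSpace ℝ (Fin n))).symm f, ?_⟩
  intro i hi
  have hfa : f (a i) < u := by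
    refine hfu (a i) (subset_convexHull ℝ _ ?_)
    exact Finset.mem_coe.2 (Finset.mem_image_of_mem a hi)
  rw [real_inner_smul_right, real_inner_comm, InnerProductSpace.toDual_symm_apply]
  have hupos : (0 : ℝ) < -u := by linarith
  rw [inv_mul_le_iff₀ hupos]
  nlinarith [hfa]

/-- A polyhedron `K ⊆ ℝⁿ` with nonempty interior satisfies a uniform
interior-ball condition: there exist `ε > 0` and `δ > 0` such that every `x ∈ K` is within
distance `δ` of a point `x₀ ∈ K` around which the open ball of radius `ε` lies in `K`. -/
theorem polyhedron_uniform_interior_ball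
    {n m : ℕ} (a : Fin m → EuclideanSpace ℝ (Fin n)) (b : Fin m → ℝ)
    (K : Set (EuclideanSpace ℝ (Fin n)))
    (hK : K = {x : EuclideanSpace ℝ (Fin n) | ∀ i, ⟪a i, x⟫_ℝ ≤ b i})
    (hint : (interior K).Nonempty) :
    ∃ ε > (0 : ℝ), ∃ δ > (0 : ℝ), ∀ x ∈ K, ∃ x₀ ∈ K,
      ‖x - x₀‖ ≤ δ ∧ Metric.ball x₀ ε ⊆ K := by
  classical
  obtain ⟨z, hz⟩ := hint
  have hzK : z ∈ K := interior_subset hz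
  have hzb : ∀ i, ⟪a i, z⟫_ℝ ≤ b i := by rw [hK] at hzK; exact hzK
  obtain ⟨ρ, hρ, hball⟩ := Metric.mem_nhds_iff.1 (mem_interior_iff_mem_nhds.1 hz)
  by_cases hA : ∃ i, a i ≠ 0
  swap
  · -- all a i = 0 : K = univ
    push_neg at hA
    refine ⟨1, one_pos, 1, one_pos, fun x hx => ⟨x, hx, by simp, ?_⟩⟩
    intro y _
    rw [hK]
    intro i
    have := hzb i
    simpa [hA i] using this
  -- main case
  have hmargin : ∀ i, a i ≠ 0 → ⟪a i, z⟫_ℝ + ρ / 2 * ‖a i‖ ≤ b i := by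
    intro i hi
    have hna : 0 < ‖a i‖ := norm_pos_iff.2 hi
    have hyK : z + (ρ / 2 * ‖a i‖⁻¹) • a i ∈ K := by
      apply hball
      rw [Metric.mem_ball, dist_eq_norm, add_sub_cancel_left, norm_smul, Real.norm_eq_abs,
        abs_of_nonneg (by positivity)]
      rw [mul_assoc, inv_mul_cancel₀ hna.ne']
      linarith
    rw [hK] at hyK
    have := hyK i
    rw [inner_add_right, real_inner_smul_right, real_inner_self_eq_norm_mul_norm] at this
    have hq : ρ / 2 * ‖a i‖⁻¹ * (‖a i‖ * ‖a i‖) = ρ / 2 * ‖a i‖ := by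
      field_simp
    linarith [hq ▸ this]
  set A : Finset (Fin m) := Finset.univ.filter fun i => a i ≠ 0 with hAdef
  have hA' : A.Nonempty := by
    obtain ⟨i, hi⟩ := hA
    exact ⟨i, by simp [hAdef, hi]⟩
  have hmemA : ∀ i, a i ≠ 0 → i ∈ A := fun i hi => by simp [hAdef, hi]
  have hA0 : ∀ i ∈ A, a i ≠ 0 := fun i hi => by simpa [hAdef] using hi
  set μ : ℝ := A.inf' hA' fun i => ‖a i‖ with hμdef
  have hμ : 0 < μ := by
    rw [hμdef, Finset.lt_inf'_iff]
    exact fun i hi => norm_pos_iff.2 (hA0 i hi)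
  set N : ℝ := A.sup' hA' fun i => ‖a i‖ with hNdef
  have hNi : ∀ i ∈ A, ‖a i‖ ≤ N := fun i hi => by
    rw [hNdef]; exact Finset.le_sup' (fun j => ‖a j‖) hi
  have hμi : ∀ i ∈ A, μ ≤ ‖a i‖ := fun i hi => by
    rw [hμdef]; exact Finset.inf'_le (fun j => ‖a j‖) hi
  have hN : 0 < N := by
    obtain ⟨i, hi⟩ := hA'
    exact lt_of_lt_of_le (norm_pos_iff.2 (hA0 i hi)) (hNi i hi)
  set M : ℝ := ρ / 2 * μ with hMdef
  have hM : 0 < M := by rw [hMdef]; exact mul_pos (by linarith) hμ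
  obtain ⟨V, hV⟩ : ∃ V : Finset (Fin m) → EuclideanSpace ℝ (Fin n), ∀ J : Finset (Fin m),
      (∃ v : EuclideanSpace ℝ (Fin n), ∀ i ∈ J, ⟪a i, v⟫_ℝ ≤ -1) → ∀ i ∈ J, ⟪a i, V J⟫_ℝ ≤ -1 :=
    ⟨fun J => if h : ∃ v : EuclideanSpace ℝ (Fin n), ∀ i ∈ J, ⟪a i, v⟫_ℝ ≤ -1 then h.choose else 0,
      fun J hJ => by simpa only [dif_pos hJ] using hJ.choose_spec⟩
  set D : ℝ := (Finset.univ : Finset (Finset (Fin m))).sup' Finset.univ_nonempty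
    (fun J => ‖V J‖) with hDdef
  have hVD : ∀ J, ‖V J‖ ≤ D := fun J => by
    rw [hDdef]; exact Finset.le_sup' (fun J => ‖V J‖) (Finset.mem_univ J)
  have hD0 : (0 : ℝ) ≤ D := le_trans (norm_nonneg (V ∅)) (hVD ∅)
  set t : ℝ := M / (4 * N * (D + 1)) with htdef
  have hden : (0 : ℝ) < 4 * N * (D + 1) :=
    mul_pos (by linarith) (by linarith)
  have ht : 0 < t := div_pos hM hden
  set ε : ℝ := min t (M / 4) / N with hεdef
  have hmin : 0 < min t (M / 4) := lt_min ht (by linarith)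
  have hε : 0 < ε := div_pos hmin hN
  have hεN : ε * N = min t (M / 4) := div_mul_cancel₀ _ hN.ne'
  set δ : ℝ := t * (D + 1) with hδdef
  have hδ : 0 < δ := mul_pos ht (by linarith)
  have htND : t * (N * D) ≤ M / 4 := by
    rw [htdef, div_mul_eq_mul_div, div_le_iff₀ hden]
    nlinarith
  refine ⟨ε, hε, δ, hδ, ?_⟩
  intro x hxK
  have hxb : ∀ i, ⟪a i, x⟫_ℝ ≤ b i := by rw [hK] at hxK; exact hxK
  set I : Finset (Fin m) := A.filter (fun i => M / 2 < ⟪a i, x - z⟫_ℝ) with hIdef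
  have hex : ∃ v : EuclideanSpace ℝ (Fin n), ∀ i ∈ I, ⟪a i, v⟫_ℝ ≤ -1 := by
    refine gordan_aux a I (x - z) fun i hi => ?_
    have := (Finset.mem_filter.1 hi).2
    linarith
  have hv : ∀ i ∈ I, ⟪a i, V I⟫_ℝ ≤ -1 := hV I hex
  have master : ∀ i, a i ≠ 0 → ⟪a i, x + t • V I⟫_ℝ ≤ b i - min t (M / 4) := by
    intro i hi
    have hiA : i ∈ A := hmemA i hi
    rw [inner_add_right, real_inner_smul_right]
    by_cases hiI : i ∈ I
    · have h1 : t * ⟪a i, V I⟫_ℝ ≤ t * (-1) :=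
        mul_le_mul_of_nonneg_left (hv i hiI) ht.le
      have h2 := hxb i
      have h3 : min t (M / 4) ≤ t := min_le_left _ _
      linarith
    · have h2 : ⟪a i, x - z⟫_ℝ ≤ M / 2 := by
        by_contra h
        exact hiI (Finset.mem_filter.2 ⟨hiA, by linarith⟩)
      have h3 := hmargin i hi
      have h4 : ρ / 2 * μ ≤ ρ / 2 * ‖a i‖ :=
        mul_le_mul_of_nonneg_left (hμi i hiA) (by linarith)
      have h5 : ⟪a i, x⟫_ℝ ≤ b i - M / 2 := by
        have heq : ⟪a i, x⟫_ℝ = ⟪a i, z⟫_ℝ + ⟪a i, x - z⟫_ℝ := by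
          rw [inner_sub_right]; ring
        rw [heq, hMdef] at *
        linarith
      have h6 : t * ⟪a i, V I⟫_ℝ ≤ M / 4 := by
        have hc1 : ⟪a i, V I⟫_ℝ ≤ ‖a i‖ * ‖V I‖ := real_inner_le_norm _ _
        have hc2 : ‖a i‖ * ‖V I‖ ≤ N * D :=
          mul_le_mul (hNi i hiA) (hVD I) (norm_nonneg _) hN.le
        calc t * ⟪a i, V I⟫_ℝ ≤ t * (N * D) :=
              mul_le_mul_of_nonneg_left (le_trans hc1 hc2) ht.le
          _ ≤ M / 4 := htND
      have h7 : min t (M / 4) ≤ M / 4 := min_le_right _ _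
      linarith
  refine ⟨x + t • V I, ?_, ?_, ?_⟩
  · rw [hK]
    intro i
    by_cases hi : a i = 0
    · simpa [hi] using hxb i
    · linarith [master i hi, hmin]
  · have heq : x - (x + t • V I) = -(t • V I) := by abel
    rw [heq, norm_neg, norm_smul, Real.norm_eq_abs, abs_of_pos ht, hδdef]
    have := hVD I
    nlinarith
  · intro y hy
    rw [hK]
    intro i
    by_cases hi : a i = 0
    · simpa [hi] using hxb i
    · have hiA : i ∈ A := hmemA i hi
      have h1 := master i hi
      have h2 : ⟪a i, y - (x + t • V I)⟫_ℝ ≤ ‖a i‖ * ‖y - (x + t • V I)‖ :=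
        real_inner_le_norm _ _
      have h3 : ‖y - (x + t • V I)‖ < ε := by
        rw [Metric.mem_ball, dist_eq_norm] at hy
        exact hy
      have h4 : ‖a i‖ * ‖y - (x + t • V I)‖ ≤ N * ε :=
        mul_le_mul (hNi i hiA) h3.le (norm_nonneg _) hN.le
      have heq : ⟪a i, y⟫_ℝ = ⟪a i, x + t • V I⟫_ℝ + ⟪a i, y - (x + t • V I)⟫_ℝ := by
        rw [inner_sub_right]; ring
      rw [heq]
      nlinarith [hεN]
end

section
/- Let K ⊆ ℝⁿ be a closed convex set with 0 ∈ K, and let f̄ : ℝⁿ → ℝ be differentiable with ℓ-Lipschitz gradient which is μ-strongly convex outside a ball of radius R > 0 relative to K, i.e. (x − y)ᵀ(∇f̄(x) − ∇f̄(y)) ≥ μ‖x − y‖² for all x, y ∈ K with ‖x − y‖ ≥ R. Then for every β > 0, the integral ∫_K e^{−β·f̄(x)} dx (with respect to Lebesgue measure on ℝⁿ) is finite. -/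
open Set MeasureTheory
open scoped InnerProductSpace

/-- If `f̄` has an `ℓ`-Lipschitz gradient and is `μ`-strongly convex outside a
ball of radius `R` relative to a closed convex set `K` containing `0`, then for every `β > 0`
the Gibbs integrand `e^{-β f̄}` is (Lebesgue-)integrable on `K`. -/
theorem gibbs_integrand_integrableOn
    {n : ℕ} {K : Set (EuclideanSpace ℝ (Fin n))}
    (hK_cl : IsClosed K) (hK_conv : Convex ℝ K)
    (h0K : (0 : EuclideanSpace ℝ (Fin n)) ∈ K)
    (fbar : EuclideanSpace ℝ (Fin n) → ℝ)
    (gbar : EuclideanSpace ℝ (Fin n) → EuclideanSpace ℝ (Fin n))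
    (hgrad : ∀ x, HasGradientAt fbar (gbar x) x)
    (ℓ μ R : ℝ) (hℓ : 0 < ℓ) (hμ : 0 < μ) (hR : 0 < R)
    (hlip : ∀ x y, ‖gbar x - gbar y‖ ≤ ℓ * ‖x - y‖)
    (hconv : ∀ x ∈ K, ∀ y ∈ K, R ≤ ‖x - y‖ →
      μ * ‖x - y‖ ^ 2 ≤ ⟪x - y, gbar x - gbar y⟫_ℝ) :
    ∀ β : ℝ, 0 < β →
      IntegrableOn (fun x => Real.exp (-β * fbar x)) K volume := by
  intro β hβ
  -- continuity of `gbar` and `fbar`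
  have hgcont : Continuous gbar := by
    have : LipschitzWith ⟨ℓ, hℓ.le⟩ gbar := by
      apply LipschitzWith.of_dist_le_mul
      intro x y
      rw [dist_eq_norm, dist_eq_norm]; exact hlip x y
    exact this.continuous
  have hfcont : Continuous fbar :=
    continuous_iff_continuousAt.mpr fun x => (hgrad x).differentiableAt.continuousAt
  -- key quadratic lower bound on `K`
  have key : ∀ x ∈ K, fbar 0 + ⟪gbar 0, x⟫_ℝ - (μ + ℓ) * R * ‖x‖ + μ / 2 * ‖x‖ ^ 2 ≤ fbar x := by
    intro x hx
    have hderiv : ∀ t : ℝ, HasDerivAt (fun t : ℝ => fbar (t • x)) ⟪gbar (t • x), x⟫_ℝ t := by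
      intro t
      have h1 : HasDerivAt (fun t : ℝ => t • x) x t := by
        simpa using (hasDerivAt_id t).smul_const x
      have h2 := (hgrad (t • x)).hasFDerivAt.comp_hasDerivAt t h1
      exact h2
    have hcont : Continuous fun t : ℝ => ⟪gbar (t • x), x⟫_ℝ :=
      (hgcont.comp (continuous_id.smul continuous_const)).inner continuous_const
    have hFTC : fbar x - fbar 0 = ∫ t in (0:ℝ)..1, ⟪gbar (t • x), x⟫_ℝ := by
      have := intervalIntegral.integral_eq_sub_of_hasDerivAt
        (f := fun t : ℝ => fbar (t • x)) (fun t _ => hderiv t)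
        (hcont.intervalIntegrable 0 1)
      simpa using this.symm
    have hbnd : ∀ t ∈ Set.Icc (0:ℝ) 1,
        ⟪gbar 0, x⟫_ℝ - (μ + ℓ) * R * ‖x‖ + μ * ‖x‖ ^ 2 * t ≤ ⟪gbar (t • x), x⟫_ℝ := by
      intro t ht
      have hxK : t • x ∈ K := by
        have := hK_conv h0K hx (by linarith [ht.2] : (0:ℝ) ≤ 1 - t) ht.1 (by ring)
        simpa using this
      have hsplit : ⟪gbar (t • x), x⟫_ℝ
          = ⟪gbar 0, x⟫_ℝ + ⟪gbar (t • x) - gbar 0, x⟫_ℝ := by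
        rw [inner_sub_left]; ring
      have hnorm : ‖t • x - (0 : EuclideanSpace ℝ (Fin n))‖ = t * ‖x‖ := by
        simp [norm_smul, abs_of_nonneg ht.1]
      rcases le_or_gt R (t * ‖x‖) with hcase | hcase
      · have ht0 : 0 < t := by nlinarith [norm_nonneg x]
        have h1 := hconv (t • x) hxK 0 h0K (by rw [hnorm]; exact hcase)
        rw [hnorm] at h1
        have h2 : ⟪t • x - (0 : EuclideanSpace ℝ (Fin n)), gbar (t • x) - gbar 0⟫_ℝ
            = t * ⟪x, gbar (t • x) - gbar 0⟫_ℝ := by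
          rw [sub_zero, real_inner_smul_left]
        rw [h2] at h1
        have h3 : μ * t * ‖x‖ ^ 2 ≤ ⟪x, gbar (t • x) - gbar 0⟫_ℝ := by
          have := (mul_le_mul_iff_right₀ ht0).mp (by nlinarith : t * (μ * t * ‖x‖ ^ 2) ≤ t * ⟪x, gbar (t • x) - gbar 0⟫_ℝ)
          linarith
        have h4 : μ * t * ‖x‖ ^ 2 ≤ ⟪gbar (t • x) - gbar 0, x⟫_ℝ := by
          rw [real_inner_comm]; exact h3
        rw [hsplit]
        nlinarith [mul_nonneg (mul_nonneg (by linarith : (0:ℝ) ≤ μ + ℓ) hR.le) (norm_nonneg x)]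
      · have hCS : |⟪gbar (t • x) - gbar 0, x⟫_ℝ| ≤ ℓ * (t * ‖x‖) * ‖x‖ := by
          calc |⟪gbar (t • x) - gbar 0, x⟫_ℝ| ≤ ‖gbar (t • x) - gbar 0‖ * ‖x‖ :=
                abs_real_inner_le_norm _ _
            _ ≤ ℓ * (t * ‖x‖) * ‖x‖ := by
                have := hlip (t • x) 0
                rw [hnorm] at this
                nlinarith [norm_nonneg x]
        rw [hsplit]
        nlinarith [neg_abs_le ⟪gbar (t • x) - gbar 0, x⟫_ℝ,
          mul_nonneg (mul_nonneg (by linarith : (0:ℝ) ≤ μ + ℓ) (by linarith : (0:ℝ) ≤ R - t * ‖x‖)) (norm_nonneg x)]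
    have hmono : ∫ t in (0:ℝ)..1, (⟪gbar 0, x⟫_ℝ - (μ + ℓ) * R * ‖x‖ + μ * ‖x‖ ^ 2 * t)
        ≤ ∫ t in (0:ℝ)..1, ⟪gbar (t • x), x⟫_ℝ := by
      apply intervalIntegral.integral_mono_on zero_le_one
      · exact ((continuous_const.add (continuous_const.mul continuous_id)).intervalIntegrable 0 1)
      · exact hcont.intervalIntegrable 0 1
      · exact hbnd
    have hcomp : ∫ t in (0:ℝ)..1, (⟪gbar 0, x⟫_ℝ - (μ + ℓ) * R * ‖x‖ + μ * ‖x‖ ^ 2 * t)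
        = ⟪gbar 0, x⟫_ℝ - (μ + ℓ) * R * ‖x‖ + μ / 2 * ‖x‖ ^ 2 := by
      have hi2 : IntervalIntegrable (fun t : ℝ => μ * ‖x‖ ^ 2 * t) volume 0 1 := by
        apply Continuous.intervalIntegrable; fun_prop
      rw [intervalIntegral.integral_add intervalIntegrable_const hi2,
        intervalIntegral.integral_const, intervalIntegral.integral_const_mul]
      norm_num
      try ring
    rw [hcomp] at hmono
    linarith [hFTC ▸ hmono]
  -- constants
  set C : ℝ := ‖gbar 0‖ + (μ + ℓ) * R with hC
  have key2 : ∀ x ∈ K, fbar 0 - C * ‖x‖ + μ / 2 * ‖x‖ ^ 2 ≤ fbar x := by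
    intro x hx
    have h1 := key x hx
    have h2 : -(‖gbar 0‖ * ‖x‖) ≤ ⟪gbar 0, x⟫_ℝ := by
      have := abs_real_inner_le_norm (gbar 0) x
      cases abs_le.mp this with
      | intro h _ => linarith
    simp only [hC]
    nlinarith
  set D : ℝ := -β * fbar 0 + β * C ^ 2 / μ with hD
  have hgauss : Integrable (fun x : EuclideanSpace ℝ (Fin n) =>
      Real.exp (-(β * μ / 4) * ‖x‖ ^ 2)) := by
    have hb : (0 : ℝ) < ((β * μ / 4 : ℝ) : ℂ).re := by
      simpa using by positivity
    have h := (GaussianFourier.integrable_cexp_neg_mul_sq_norm_add (V := EuclideanSpace ℝ (Fin n))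
      (b := ((β * μ / 4 : ℝ) : ℂ)) hb 0 0).norm
    simp only [zero_mul, add_zero, Complex.norm_exp,
      ← Complex.ofReal_pow, ← Complex.ofReal_mul, ← Complex.ofReal_neg,
      Complex.ofReal_re, neg_mul] at h
    simpa [neg_mul] using h
  have hbound : Integrable (fun x : EuclideanSpace ℝ (Fin n) =>
      Real.exp D * Real.exp (-(β * μ / 4) * ‖x‖ ^ 2)) := hgauss.const_mul _
  apply Integrable.mono' hbound.integrableOn
  · exact ((Real.continuous_exp.comp (continuous_const.mul hfcont)).aestronglyMeasurable).restrict
  · rw [ae_restrict_iff' hK_cl.measurableSet]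
    filter_upwards with x hx
    rw [Real.norm_eq_abs, abs_of_pos (Real.exp_pos _), ← Real.exp_add, Real.exp_le_exp]
    have h1 := key2 x hx
    have hAM : β * C * ‖x‖ - β * μ / 4 * ‖x‖ ^ 2 ≤ β * C ^ 2 / μ := by
      rw [le_div_iff₀ hμ]
      have hexp : (β * C * ‖x‖ - β * μ / 4 * ‖x‖ ^ 2) * μ
          = β * C ^ 2 - β / 4 * (μ * ‖x‖ - 2 * C) ^ 2 := by ring
      have hsq : (0:ℝ) ≤ β / 4 * (μ * ‖x‖ - 2 * C) ^ 2 := by positivity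
      linarith
    nlinarith [mul_le_mul_of_nonneg_left h1 hβ.le, hAM]
end

section
/- Let K ⊆ ℝⁿ be a nonempty closed convex set with 0 ∈ K, and let f̄ : ℝⁿ → ℝ be differentiable with ℓ-Lipschitz gradient which is μ-strongly convex outside a ball of radius R > 0 relative to K, i.e. (x − y)ᵀ(∇f̄(x) − ∇f̄(y)) ≥ μ‖x − y‖² for all x, y ∈ K with ‖x − y‖ ≥ R. Then there exists x* ∈ K such that f̄(x*) = inf_{x ∈ K} f̄(x), i.e. f̄ attains its minimum over K. -/
open Set
open scoped InnerProductSpace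

/-- If `f̄` has an `ℓ`-Lipschitz gradient and is `μ`-strongly convex outside a
ball of radius `R` relative to a nonempty closed convex set `K` containing `0`, then `f̄`
attains its minimum over `K`. -/
theorem exists_min_of_strongly_convex_outside_ball
    {n : ℕ} {K : Set (EuclideanSpace ℝ (Fin n))}
    (hK_ne : K.Nonempty) (hK_cl : IsClosed K) (hK_conv : Convex ℝ K)
    (h0K : (0 : EuclideanSpace ℝ (Fin n)) ∈ K)
    (fbar : EuclideanSpace ℝ (Fin n) → ℝ)
    (gbar : EuclideanSpace ℝ (Fin n) → EuclideanSpace ℝ (Fin n))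
    (hgrad : ∀ x, HasGradientAt fbar (gbar x) x)
    (ℓ μ R : ℝ) (hℓ : 0 < ℓ) (hμ : 0 < μ) (hR : 0 < R)
    (hlip : ∀ x y, ‖gbar x - gbar y‖ ≤ ℓ * ‖x - y‖)
    (hconv : ∀ x ∈ K, ∀ y ∈ K, R ≤ ‖x - y‖ →
      μ * ‖x - y‖ ^ 2 ≤ ⟪x - y, gbar x - gbar y⟫_ℝ) :
    ∃ xstar ∈ K, ∀ x ∈ K, fbar xstar ≤ fbar x := by
  -- continuity of g and f
  have hcont_g : Continuous gbar := by
    have : LipschitzWith (Real.toNNReal ℓ) gbar := by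
      apply LipschitzWith.of_dist_le_mul
      intro x y
      rw [dist_eq_norm, dist_eq_norm]
      calc ‖gbar x - gbar y‖ ≤ ℓ * ‖x - y‖ := hlip x y
        _ ≤ (Real.toNNReal ℓ : ℝ) * ‖x - y‖ := by
            gcongr; exact Real.le_coe_toNNReal ℓ
    exact this.continuous
  have hcont_f : Continuous fbar := by
    rw [continuous_iff_continuousAt]
    exact fun x => (hgrad x).hasFDerivAt.continuousAt
  set C : ℝ := ‖gbar 0‖ + (μ + ℓ) * R with hCdef
  have hC : 0 < C := by positivity
  -- key coercivity bound
  have key : ∀ x ∈ K, fbar 0 + (μ / 2 * ‖x‖ ^ 2 - C * ‖x‖) ≤ fbar x := by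
    intro x hx
    -- derivative of t ↦ fbar (t • x)
    have hderiv : ∀ t ∈ Set.uIcc (0:ℝ) 1,
        HasDerivAt (fun t : ℝ => fbar (t • x)) ⟪gbar (t • x), x⟫_ℝ t := by
      intro t _
      have h1 : HasDerivAt (fun t : ℝ => t • x) x t := by
        simpa using (hasDerivAt_id t).smul_const x
      have h2 := (hgrad (t • x)).hasFDerivAt.comp_hasDerivAt t h1
      simp at h2; exact h2
    have hcont_integrand : Continuous fun t : ℝ => ⟪gbar (t • x), x⟫_ℝ :=
      (hcont_g.comp (continuous_id.smul continuous_const)).inner continuous_const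
    have hFTC : ∫ t in (0:ℝ)..1, ⟪gbar (t • x), x⟫_ℝ = fbar x - fbar 0 := by
      have := intervalIntegral.integral_eq_sub_of_hasDerivAt hderiv
        (hcont_integrand.intervalIntegrable 0 1)
      simpa using this
    -- pointwise lower bound for the integrand
    have hbound : ∀ t ∈ Set.Icc (0:ℝ) 1,
        ⟪gbar 0, x⟫_ℝ + (μ * ‖x‖ ^ 2 * t - (μ + ℓ) * R * ‖x‖)
          ≤ ⟪gbar (t • x), x⟫_ℝ := by
      intro t ht
      obtain ⟨ht0, ht1⟩ := ht
      have htx : (t • x) ∈ K := by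
        have := hK_conv h0K hx (by linarith : (0:ℝ) ≤ 1 - t) ht0 (by ring)
        simpa using this
      have hnorm_tx : ‖t • x‖ = t * ‖x‖ := by
        rw [norm_smul, Real.norm_eq_abs, abs_of_nonneg ht0]
      have hsplit : ⟪gbar (t • x), x⟫_ℝ
          = ⟪gbar 0, x⟫_ℝ + ⟪gbar (t • x) - gbar 0, x⟫_ℝ := by
        rw [inner_sub_left]; ring
      rw [hsplit]
      have hRx : 0 ≤ (μ + ℓ) * R * ‖x‖ := by positivity
      by_cases hcase : R ≤ t * ‖x‖
      · -- far case: strong convexity between t•x and 0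
        have ht0' : 0 < t := by
          rcases lt_or_ge 0 t with h | h
          · exact h
          · exfalso; nlinarith [norm_nonneg x]
        have hsc0 := hconv (t • x) htx 0 h0K (by simpa [hnorm_tx] using hcase)
        have hsc : μ * ‖t • x‖ ^ 2 ≤ ⟪t • x, gbar (t • x) - gbar 0⟫_ℝ := by
          simpa using hsc0
        have hinner : ⟪t • x, gbar (t • x) - gbar 0⟫_ℝ
            = t * ⟪x, gbar (t • x) - gbar 0⟫_ℝ := real_inner_smul_left _ _ _
        have : μ * (t * ‖x‖) ^ 2 ≤ t * ⟪x, gbar (t • x) - gbar 0⟫_ℝ := by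
          rw [← hinner]; simpa [hnorm_tx] using hsc
        have h2 : μ * ‖x‖ ^ 2 * t ≤ ⟪x, gbar (t • x) - gbar 0⟫_ℝ := by
          nlinarith
        rw [real_inner_comm] at h2
        linarith
      · -- near case: Lipschitz bound
        push_neg at hcase
        have hcs : |⟪gbar (t • x) - gbar 0, x⟫_ℝ| ≤ ‖gbar (t • x) - gbar 0‖ * ‖x‖ :=
          abs_real_inner_le_norm _ _
        have hlipb : ‖gbar (t • x) - gbar 0‖ ≤ ℓ * (t * ‖x‖) := by
          have := hlip (t • x) 0
          simpa [hnorm_tx] using this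
        have h3 : -(ℓ * (t * ‖x‖) * ‖x‖) ≤ ⟪gbar (t • x) - gbar 0, x⟫_ℝ := by
          have hub : ‖gbar (t • x) - gbar 0‖ * ‖x‖ ≤ ℓ * (t * ‖x‖) * ‖x‖ := by
            gcongr
          have := abs_le.mp hcs
          linarith
        nlinarith [norm_nonneg x, mul_le_mul_of_nonneg_right hcase.le (norm_nonneg x)]
    -- integrate the bound
    set a : ℝ := ⟪gbar 0, x⟫_ℝ with hadef
    have hint_aux : IntervalIntegrable
        (fun t : ℝ => a + (μ * ‖x‖ ^ 2 * t - (μ + ℓ) * R * ‖x‖))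
        MeasureTheory.volume 0 1 :=
      (Continuous.intervalIntegrable (by fun_prop) 0 1)
    have hint_le : ∫ t in (0:ℝ)..1,
          (a + (μ * ‖x‖ ^ 2 * t - (μ + ℓ) * R * ‖x‖))
        ≤ ∫ t in (0:ℝ)..1, ⟪gbar (t • x), x⟫_ℝ := by
      apply intervalIntegral.integral_mono_on (by norm_num) hint_aux
        (hcont_integrand.intervalIntegrable 0 1)
      exact hbound
    have hid : (∫ t in (0:ℝ)..1, μ * ‖x‖ ^ 2 * t) = μ * ‖x‖ ^ 2 / 2 := by
      rw [intervalIntegral.integral_const_mul, integral_id]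
      ring
    have hint_val : ∫ t in (0:ℝ)..1,
          (a + (μ * ‖x‖ ^ 2 * t - (μ + ℓ) * R * ‖x‖))
        = a + μ * ‖x‖ ^ 2 / 2 - (μ + ℓ) * R * ‖x‖ := by
      rw [intervalIntegral.integral_add (continuous_const.intervalIntegrable 0 1)
          ((Continuous.intervalIntegrable (by fun_prop) 0 1)),
        intervalIntegral.integral_sub
          ((Continuous.intervalIntegrable (by fun_prop) 0 1))
          (continuous_const.intervalIntegrable 0 1),
        hid]
      simp
      ring
    have hinner0 : -(‖gbar 0‖ * ‖x‖) ≤ a := by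
      have h := abs_le.mp (abs_real_inner_le_norm (gbar 0) x)
      linarith [h.1]
    have := hFTC ▸ hint_le
    rw [hint_val] at this
    nlinarith [norm_nonneg x]
  -- minimize over the compact set K ∩ closedBall 0 (2C/μ)
  set r : ℝ := 2 * C / μ with hrdef
  have hr : 0 < r := by positivity
  have hScompact : IsCompact (K ∩ Metric.closedBall 0 r) := by
    apply Metric.isCompact_of_isClosed_isBounded
      (hK_cl.inter Metric.isClosed_closedBall)
      (Metric.isBounded_closedBall.subset (Set.inter_subset_right))
  have h0S : (0 : EuclideanSpace ℝ (Fin n)) ∈ K ∩ Metric.closedBall 0 r :=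
    ⟨h0K, Metric.mem_closedBall_self hr.le⟩
  obtain ⟨xstar, hxS, hmin⟩ :=
    hScompact.exists_isMinOn ⟨0, h0S⟩ hcont_f.continuousOn
  refine ⟨xstar, hxS.1, fun x hxK => ?_⟩
  by_cases hxr : ‖x‖ ≤ r
  · exact hmin ⟨hxK, by simpa [Metric.mem_closedBall, dist_eq_norm] using hxr⟩
  · push_neg at hxr
    have h1 : fbar xstar ≤ fbar 0 := hmin h0S
    have h2 := key x hxK
    have h3 : 0 < μ / 2 * ‖x‖ ^ 2 - C * ‖x‖ := by
      have : 2 * C / μ < ‖x‖ := hxr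
      have hxpos : 0 < ‖x‖ := lt_trans hr hxr
      rw [div_lt_iff₀ hμ] at this
      nlinarith
    linarith
end

section
/- Let K ⊆ ℝⁿ be a closed convex set with 0 ∈ K, and let f̄ : ℝⁿ → ℝ be differentiable with ℓ-Lipschitz gradient which is μ-strongly convex outside a ball of radius R > 0 relative to K, i.e. (x − y)ᵀ(∇f̄(x) − ∇f̄(y)) ≥ μ‖x − y‖² for all x, y ∈ K with ‖x − y‖ ≥ R. If x* ∈ K minimizes f̄ over K, then ‖x*‖ ≤ max{R, ‖∇f̄(0)‖/μ}. -/
open Set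
open scoped InnerProductSpace

/-- If `f̄` has an `ℓ`-Lipschitz gradient and is `μ`-strongly convex outside a
ball of radius `R` relative to a closed convex set `K` containing `0`, and `x*` minimizes `f̄`
over `K`, then `‖x*‖ ≤ max {R, ‖∇f̄(0)‖/μ}`. -/
theorem norm_min_le_of_strongly_convex_outside_ball
    {n : ℕ} {K : Set (EuclideanSpace ℝ (Fin n))}
    (hK_cl : IsClosed K) (hK_conv : Convex ℝ K)
    (h0K : (0 : EuclideanSpace ℝ (Fin n)) ∈ K)
    (fbar : EuclideanSpace ℝ (Fin n) → ℝ)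
    (gbar : EuclideanSpace ℝ (Fin n) → EuclideanSpace ℝ (Fin n))
    (hgrad : ∀ x, HasGradientAt fbar (gbar x) x)
    (ℓ μ R : ℝ) (hℓ : 0 < ℓ) (hμ : 0 < μ) (hR : 0 < R)
    (hlip : ∀ x y, ‖gbar x - gbar y‖ ≤ ℓ * ‖x - y‖)
    (hconv : ∀ x ∈ K, ∀ y ∈ K, R ≤ ‖x - y‖ →
      μ * ‖x - y‖ ^ 2 ≤ ⟪x - y, gbar x - gbar y⟫_ℝ)
    (xstar : EuclideanSpace ℝ (Fin n)) (hxK : xstar ∈ K)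
    (hmin : ∀ x ∈ K, fbar xstar ≤ fbar x) :
    ‖xstar‖ ≤ max R (‖gbar 0‖ / μ) := by
  rcases le_or_gt ‖xstar‖ R with h | h
  · exact le_max_of_le_left h
  -- first-order optimality: ⟪gbar xstar, 0 - xstar⟫ ≥ 0
  have hmem : (0 : EuclideanSpace ℝ (Fin n)) - xstar ∈ posTangentConeAt K xstar :=
    sub_mem_posTangentConeAt_of_segment_subset (hK_conv.segment_subset hxK h0K)
  have hloc : IsLocalMinOn fbar K xstar := (isMinOn_iff.2 hmin).localize
  have hfd : HasFDerivWithinAt fbar ((InnerProductSpace.toDual ℝ _) (gbar xstar)) K xstar :=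
    (hgrad xstar).hasFDerivAt.hasFDerivWithinAt
  have hopt : (0:ℝ) ≤ ⟪gbar xstar, (0 : EuclideanSpace ℝ (Fin n)) - xstar⟫_ℝ := by
    simpa using hloc.hasFDerivWithinAt_nonneg hfd hmem
  have hopt' : ⟪xstar, gbar xstar⟫_ℝ ≤ 0 := by
    rw [zero_sub, inner_neg_right] at hopt
    have := real_inner_comm xstar (gbar xstar)
    linarith
  -- strong convexity
  have hcv := hconv xstar hxK 0 h0K (by simpa using h.le)
  rw [sub_zero] at hcv
  have hsq : μ * ‖xstar‖ ^ 2 ≤ ⟪xstar, gbar xstar⟫_ℝ - ⟪xstar, gbar 0⟫_ℝ := by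
    simpa [inner_sub_right] using hcv
  have hcs : ⟪xstar, -gbar 0⟫_ℝ ≤ ‖xstar‖ * ‖gbar 0‖ := by
    simpa using real_inner_le_norm xstar (-gbar 0)
  have h1 : μ * ‖xstar‖ ^ 2 ≤ ‖xstar‖ * ‖gbar 0‖ := by
    rw [inner_neg_right] at hcs; linarith
  have hxpos : 0 < ‖xstar‖ := lt_trans hR h
  have h2 : μ * ‖xstar‖ ≤ ‖gbar 0‖ := by nlinarith
  exact le_max_of_le_right ((le_div_iff₀ hμ).2 (by linarith))
end

section
/- Let β, ℓ, μ, R > 0. Define h(s) = (ℓβ/8)·min{s², R²}, φ(s) = e^{−h(s)}, Φ(s) = ∫₀^s φ(r) dr, and R₁ = R/2 + (1/2)·√( R² + (32/(μβ))·e^{βℓR²/8} ). Then ∫₀^{R₁} Φ(s)·φ(s)^{−1} ds ≤ ( R²/2 + 16/(μβ) )·e^{βℓR²/4}. -/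
open Real

/-- With `h(s) = (ℓβ/8)·min{s², R²}`, `φ = e^{-h}`, `Φ(s) = ∫₀ˢ φ`, and
`R₁ = R/2 + (1/2)√(R² + (32/(μβ))·e^{βℓR²/8})`, one has
`∫₀^{R₁} Φ(s) φ(s)⁻¹ ds ≤ (R²/2 + 16/(μβ))·e^{βℓR²/4}`. -/
theorem xi_inverse_integral_bound
    (β ℓ μ R : ℝ) (hβ : 0 < β) (hℓ : 0 < ℓ) (hμ : 0 < μ) (hR : 0 < R) :
    (∫ s in (0 : ℝ)..(R / 2 +
        (1 / 2) * Real.sqrt (R ^ 2 + (32 / (μ * β)) * Real.exp (β * ℓ * R ^ 2 / 8))),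
      (∫ r in (0 : ℝ)..s, Real.exp (-(ℓ * β / 8) * min (r ^ 2) (R ^ 2))) *
        (Real.exp (-(ℓ * β / 8) * min (s ^ 2) (R ^ 2)))⁻¹)
      ≤ (R ^ 2 / 2 + 16 / (μ * β)) * Real.exp (β * ℓ * R ^ 2 / 4) := by
  set c := β * ℓ * R ^ 2 / 8 with hc
  set E := Real.exp c with hE
  set S := Real.sqrt (R ^ 2 + (32 / (μ * β)) * E) with hS
  set R1 := R / 2 + (1 / 2) * S with hR1
  have hEpos : 0 < E := Real.exp_pos c
  have hE1 : 1 ≤ E := Real.one_le_exp (by positivity)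
  have hSnn : 0 ≤ S := Real.sqrt_nonneg _
  have hS2 : S ^ 2 = R ^ 2 + (32 / (μ * β)) * E := by
    rw [hS, Real.sq_sqrt (by positivity)]
  have hR1nn : 0 ≤ R1 := by positivity
  have hφcont : Continuous (fun r : ℝ => Real.exp (-(ℓ * β / 8) * min (r ^ 2) (R ^ 2))) := by
    fun_prop
  have hΦcont : Continuous (fun s : ℝ =>
      ∫ r in (0 : ℝ)..s, Real.exp (-(ℓ * β / 8) * min (r ^ 2) (R ^ 2))) :=
    intervalIntegral.continuous_primitive (fun a b => hφcont.intervalIntegrable a b) 0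
  have hfcont : Continuous (fun s : ℝ =>
      (∫ r in (0 : ℝ)..s, Real.exp (-(ℓ * β / 8) * min (r ^ 2) (R ^ 2))) *
        (Real.exp (-(ℓ * β / 8) * min (s ^ 2) (R ^ 2)))⁻¹) := by
    exact hΦcont.mul (hφcont.inv₀ (fun s => (Real.exp_pos _).ne'))
  have hbound : ∀ s ∈ Set.Icc (0 : ℝ) R1,
      (∫ r in (0 : ℝ)..s, Real.exp (-(ℓ * β / 8) * min (r ^ 2) (R ^ 2))) *
        (Real.exp (-(ℓ * β / 8) * min (s ^ 2) (R ^ 2)))⁻¹ ≤ s * E := by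
    intro s hs
    have h1 : (∫ r in (0 : ℝ)..s, Real.exp (-(ℓ * β / 8) * min (r ^ 2) (R ^ 2))) ≤ s := by
      calc (∫ r in (0 : ℝ)..s, Real.exp (-(ℓ * β / 8) * min (r ^ 2) (R ^ 2)))
          ≤ ∫ _ in (0 : ℝ)..s, (1 : ℝ) := by
            apply intervalIntegral.integral_mono_on hs.1
              (hφcont.intervalIntegrable _ _) intervalIntegrable_const
            intro r _
            rw [show (1 : ℝ) = Real.exp 0 by simp, Real.exp_le_exp]
            have h0 : 0 ≤ min (r ^ 2) (R ^ 2) := le_min (sq_nonneg r) (sq_nonneg R)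
            nlinarith [hℓ.le, hβ.le, mul_nonneg (mul_nonneg hℓ.le hβ.le) h0]
        _ = s := by simp
    have h2 : (Real.exp (-(ℓ * β / 8) * min (s ^ 2) (R ^ 2)))⁻¹ ≤ E := by
      rw [← Real.exp_neg, hE, Real.exp_le_exp]
      have hm : min (s ^ 2) (R ^ 2) ≤ R ^ 2 := min_le_right _ _
      have hm0 : 0 ≤ min (s ^ 2) (R ^ 2) := le_min (sq_nonneg s) (sq_nonneg R)
      rw [hc]
      nlinarith [mul_le_mul_of_nonneg_left hm (by positivity : (0:ℝ) ≤ ℓ * β / 8)]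
    exact mul_le_mul h1 h2 (by positivity) hs.1
  calc (∫ s in (0 : ℝ)..R1,
      (∫ r in (0 : ℝ)..s, Real.exp (-(ℓ * β / 8) * min (r ^ 2) (R ^ 2))) *
        (Real.exp (-(ℓ * β / 8) * min (s ^ 2) (R ^ 2)))⁻¹)
      ≤ ∫ s in (0 : ℝ)..R1, s * E :=
        intervalIntegral.integral_mono_on hR1nn (hfcont.intervalIntegrable _ _)
          ((continuous_id.mul continuous_const).intervalIntegrable _ _) hbound
    _ = R1 ^ 2 / 2 * E := by
        rw [intervalIntegral.integral_mul_const, integral_id]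
        ring
    _ ≤ (R ^ 2 / 2 + 16 / (μ * β)) * Real.exp (β * ℓ * R ^ 2 / 4) := by
        have hexp2 : Real.exp (β * ℓ * R ^ 2 / 4) = E * E := by
          rw [hE, ← Real.exp_add, hc]; ring_nf
        rw [hexp2, hR1]
        clear_value R1 S E c
        have hm2 : 32 / (μ * β) = 2 * (16 / (μ * β)) := by ring
        rw [hm2] at hS2
        set m := 16 / (μ * β) with hmdef
        have hμβ : 0 < m := by rw [hmdef]; positivity
        clear_value m
        have h1 : (R / 2 + 1 / 2 * S) ^ 2 ≤ R ^ 2 + 2 * m * E := by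
          nlinarith [sq_nonneg (R - S), hS2]
        have h2 : (R ^ 2 + 2 * m * E) / 2 * E ≤ (R ^ 2 / 2 + m) * (E * E) := by
          nlinarith [mul_nonneg (sq_nonneg R) (mul_nonneg hEpos.le (sub_nonneg.2 hE1)),
            mul_pos (mul_pos hμβ hEpos) hEpos]
        calc (R / 2 + 1 / 2 * S) ^ 2 / 2 * E ≤ (R ^ 2 + 2 * m * E) / 2 * E := by
              apply mul_le_mul_of_nonneg_right _ hEpos.le
              linarith
          _ ≤ (R ^ 2 / 2 + m) * (E * E) := h2
end

section
/- Let K ⊆ ℝⁿ be a convex set with 0 ∈ K, and let f̄ : ℝⁿ → ℝ be differentiable with ℓ-Lipschitz gradient. Let m ∈ ℝ and R̂ > 0 be such that f̄(x) ≥ m for every x ∈ K with ‖x‖ ≥ R̂. Then the truncated function g(x) = min{f̄(x), m} satisfies |g(x) − g(y)| ≤ (‖∇f̄(0)‖ + ℓ·R̂)·‖x − y‖ for all x, y ∈ K. -/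
open Set

/-- If `f̄` has an `ℓ`-Lipschitz gradient and `f̄(x) ≥ m` for all `x ∈ K`
with `‖x‖ ≥ R̂`, then the truncation `g = min(f̄, m)` is `(‖∇f̄(0)‖ + ℓ·R̂)`-Lipschitz on the
convex set `K` (which contains `0`). -/
theorem truncation_lipschitz_on
    {n : ℕ} {K : Set (EuclideanSpace ℝ (Fin n))}
    (hK_conv : Convex ℝ K) (h0K : (0 : EuclideanSpace ℝ (Fin n)) ∈ K)
    (fbar : EuclideanSpace ℝ (Fin n) → ℝ)
    (gbar : EuclideanSpace ℝ (Fin n) → EuclideanSpace ℝ (Fin n))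
    (hgrad : ∀ x, HasGradientAt fbar (gbar x) x)
    (ℓ : ℝ) (hℓ : 0 < ℓ)
    (hlip : ∀ x y, ‖gbar x - gbar y‖ ≤ ℓ * ‖x - y‖)
    (m Rhat : ℝ) (hRhat : 0 < Rhat)
    (hfar : ∀ x ∈ K, Rhat ≤ ‖x‖ → m ≤ fbar x) :
    ∀ x ∈ K, ∀ y ∈ K,
      |min (fbar x) m - min (fbar y) m| ≤ (‖gbar 0‖ + ℓ * Rhat) * ‖x - y‖ := by
  set L : ℝ := ‖gbar 0‖ + ℓ * Rhat with hL
  have hL0 : 0 ≤ L := by positivity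
  -- f̄ is L-Lipschitz on the closed ball of radius R̂
  have hball : ∀ x ∈ Metric.closedBall (0 : EuclideanSpace ℝ (Fin n)) Rhat,
      ∀ y ∈ Metric.closedBall (0 : EuclideanSpace ℝ (Fin n)) Rhat,
      |fbar y - fbar x| ≤ L * ‖y - x‖ := by
    intro x hx y hy
    have := Convex.norm_image_sub_le_of_norm_hasFDerivWithin_le
      (f := fbar) (f' := fun z => (InnerProductSpace.toDual ℝ _) (gbar z))
      (s := Metric.closedBall 0 Rhat) (C := L)
      (fun z _ => ((hasGradientAt_iff_hasFDerivAt.mp (hgrad z)).hasFDerivWithinAt))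
      (fun z hz => by
        rw [(InnerProductSpace.toDual ℝ _).norm_map]
        have h1 : ‖gbar z - gbar 0‖ ≤ ℓ * ‖z - 0‖ := hlip z 0
        have h2 : ‖z‖ ≤ Rhat := by simpa using hz
        calc ‖gbar z‖ ≤ ‖gbar 0‖ + ‖gbar z - gbar 0‖ := by
              have := norm_sub_norm_le (gbar z) (gbar 0); linarith [abs_le.mp (abs_norm_sub_norm_le (gbar z) (gbar 0))]
          _ ≤ ‖gbar 0‖ + ℓ * Rhat := by
              have : ℓ * ‖z - 0‖ ≤ ℓ * Rhat := by
                simp only [sub_zero]; exact mul_le_mul_of_nonneg_left h2 hℓ.le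
              linarith
          _ = L := rfl)
      (convex_closedBall _ _) hx hy
    simpa [Real.norm_eq_abs] using this
  -- min with constant is 1-Lipschitz
  have hmin : ∀ a b : ℝ, |min a m - min b m| ≤ |a - b| := by
    intro a b
    have := abs_min_sub_min_le_max a m b m
    simpa using this
  -- mixed case helper
  have hmix : ∀ x ∈ K, ∀ y ∈ K, ‖x‖ ≤ Rhat → Rhat ≤ ‖y‖ →
      |min (fbar x) m - min (fbar y) m| ≤ L * ‖x - y‖ := by
    intro x hxK y hyK hx hy
    -- find z on segment with ‖z‖ = Rhat
    have hcont : ContinuousOn (fun t : ℝ => ‖x + t • (y - x)‖) (Icc 0 1) :=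
      (continuous_norm.comp (continuous_const.add (continuous_id.smul continuous_const))).continuousOn
    have hmem : Rhat ∈ Icc (‖x + (0:ℝ) • (y - x)‖) (‖x + (1:ℝ) • (y - x)‖) := by
      constructor <;> simp [hx, hy]
    obtain ⟨t, ht, hzt⟩ := intermediate_value_Icc (by norm_num : (0:ℝ) ≤ 1) hcont hmem
    set z := x + t • (y - x) with hz
    have hznorm : ‖z‖ = Rhat := hzt
    have hzK : z ∈ K := by
      have : z = (1 - t) • x + t • y := by
        simp only [hz, smul_sub, sub_smul, one_smul]; abel
      rw [this]
      exact hK_conv hxK hyK (by linarith [ht.2]) ht.1 (by ring)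
    have hfz : m ≤ fbar z := hfar z hzK hznorm.ge
    have hzx : ‖z - x‖ ≤ ‖x - y‖ := by
      have : z - x = t • (y - x) := by simp [hz]
      rw [this, norm_smul, Real.norm_eq_abs, abs_of_nonneg ht.1, ← norm_neg (x - y),
        neg_sub]
      nlinarith [norm_nonneg (y - x), ht.2]
    have hminy : min (fbar y) m = m := min_eq_right (hfar y hyK hy)
    have hminz : min (fbar z) m = m := min_eq_right hfz
    have h1 : |min (fbar x) m - min (fbar y) m| = |min (fbar x) m - min (fbar z) m| := by
      rw [hminy, hminz]
    rw [h1]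
    calc |min (fbar x) m - min (fbar z) m| ≤ |fbar x - fbar z| := hmin _ _
      _ = |fbar z - fbar x| := abs_sub_comm _ _
      _ ≤ L * ‖z - x‖ := hball x (by simpa using hx) z (by simp [hznorm]) 
      _ ≤ L * ‖x - y‖ := mul_le_mul_of_nonneg_left hzx hL0
  intro x hxK y hyK
  rcases le_or_gt ‖x‖ Rhat with hx | hx <;> rcases le_or_gt ‖y‖ Rhat with hy | hy
  · -- both in ball
    calc |min (fbar x) m - min (fbar y) m| ≤ |fbar x - fbar y| := hmin _ _
      _ ≤ L * ‖x - y‖ := by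
        have := hball y (by simpa using hy) x (by simpa using hx)
        simpa using this
  · -- x in ball, y outside
    exact hmix x hxK y hyK hx hy.le
  · -- x outside, y in ball
    have := hmix y hyK x hxK hy hx.le
    rw [abs_sub_comm, ← norm_neg (y - x), neg_sub] at this
    exact this
  · -- both outside
    rw [min_eq_right (hfar x hxK hx.le), min_eq_right (hfar y hyK hy.le)]
    simp only [sub_self, abs_zero]
    positivity
end

section
/- Let q > 1 be a real number, let ℓ > 0 and c₀ ∈ ℝ, and let f̄ : ℝⁿ → ℝ be a measurable function satisfying f̄(x) ≤ c₀ + ℓ‖x‖² for all x ∈ ℝⁿ. Let X be an ℝⁿ-valued random vector with E[‖X‖^{2q}] < ∞, and let m > 0 satisfy m/2 > c₀. Then E[ 1{f̄(X) > m}·(f̄(X) − m) ] ≤ E[‖X‖^{2q}]·ℓ^q·2^{q−1} / ((q−1)·m^{q−1}). -/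
open MeasureTheory

lemma aux_bernoulli {q a y : ℝ} (hq : 1 < q) (ha : 0 < a) (hy : 0 ≤ y) :
    (q - 1) * (y - a) * a ^ (q - 1) ≤ y ^ q := by
  have ht : (0:ℝ) ≤ y / a := div_nonneg hy ha.le
  have hs : (-1:ℝ) ≤ y / a - 1 := by linarith
  have hber := one_add_mul_self_le_rpow_one_add hs hq.le
  rw [add_sub_cancel] at hber
  have hya : y = a * (y / a) := by field_simp
  have h1 : y ^ q = a ^ q * (y / a) ^ q := by
    rw [hya]
    rw [Real.mul_rpow ha.le ht]
    field_simp
  have h2 : a ^ q = a ^ (q - 1) * a := by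
    rw [← Real.rpow_add_one ha.ne' (q - 1)]
    ring_nf
  have hapow : 0 < a ^ q := Real.rpow_pos_of_pos ha q
  have hapow1 : 0 < a ^ (q - 1) := Real.rpow_pos_of_pos ha (q - 1)
  have key : (q - 1) * (y / a - 1) ≤ (y / a) ^ q := by
    have : (0:ℝ) ≤ y / a := ht
    nlinarith [hber]
  calc (q - 1) * (y - a) * a ^ (q - 1)
      = a ^ q * ((q - 1) * (y / a - 1)) := by
        rw [h2]; field_simp
    _ ≤ a ^ q * (y / a) ^ q := by
        exact mul_le_mul_of_nonneg_left key hapow.le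
    _ = y ^ q := h1.symm

/-- If `f̄(x) ≤ c₀ + ℓ‖x‖²`, `E[‖X‖^{2q}] < ∞` and `m/2 > c₀` with `m > 0`
and `q > 1`, then `E[1{f̄(X) > m}·(f̄(X) - m)] ≤ E[‖X‖^{2q}]·ℓ^q·2^{q-1}/((q-1)·m^{q-1})`. -/
theorem tail_expectation_bound
    {Ω : Type*} [MeasurableSpace Ω] (P : Measure Ω) [IsProbabilityMeasure P]
    {n : ℕ} (q ℓ c₀ m : ℝ) (hq : 1 < q) (hℓ : 0 < ℓ)
    (fbar : EuclideanSpace ℝ (Fin n) → ℝ) (hf_meas : Measurable fbar)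
    (hf_bound : ∀ x, fbar x ≤ c₀ + ℓ * ‖x‖ ^ 2)
    (X : Ω → EuclideanSpace ℝ (Fin n)) (hX_meas : Measurable X)
    (hX_mom : Integrable (fun ω => ‖X ω‖ ^ (2 * q)) P)
    (hm : 0 < m) (hmc : c₀ < m / 2) :
    (∫ ω, Set.indicator {ω | m < fbar (X ω)} (fun ω => fbar (X ω) - m) ω ∂P)
      ≤ (∫ ω, ‖X ω‖ ^ (2 * q) ∂P) * ℓ ^ q * 2 ^ (q - 1) / ((q - 1) * m ^ (q - 1)) := by
  set C : ℝ := ℓ ^ q * 2 ^ (q - 1) / ((q - 1) * m ^ (q - 1)) with hC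
  have hq1 : (0:ℝ) < q - 1 := by linarith
  have hm2 : (0:ℝ) < m / 2 := by linarith
  have hmpow : (0:ℝ) < m ^ (q - 1) := Real.rpow_pos_of_pos hm _
  have h2pow : (0:ℝ) < (2:ℝ) ^ (q - 1) := Real.rpow_pos_of_pos two_pos _
  have hℓpow : (0:ℝ) < ℓ ^ q := Real.rpow_pos_of_pos hℓ _
  have hCpos : 0 < C := by positivity
  have hpt : ∀ ω, Set.indicator {ω | m < fbar (X ω)} (fun ω => fbar (X ω) - m) ω
      ≤ ‖X ω‖ ^ (2 * q) * C := by
    intro ω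
    set x := X ω
    have hxq : (0:ℝ) ≤ ‖x‖ ^ (2 * q) := Real.rpow_nonneg (norm_nonneg _) _
    by_cases h : m < fbar x
    · rw [Set.indicator_of_mem (by exact h)]
      set y : ℝ := ℓ * ‖x‖ ^ 2 with hy
      have hy0 : 0 ≤ y := by positivity
      have h1 : fbar x - m ≤ y - m / 2 := by
        have := hf_bound x; linarith
      have h2 : y - m / 2 ≤ y ^ q / ((q - 1) * (m / 2) ^ (q - 1)) := by
        have := aux_bernoulli hq hm2 hy0
        have hp : (0:ℝ) < (q - 1) * (m / 2) ^ (q - 1) := by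
          have := Real.rpow_pos_of_pos hm2 (q - 1); positivity
        rw [le_div_iff₀ hp]
        nlinarith [this]
      have hyq : y ^ q = ℓ ^ q * ‖x‖ ^ (2 * q) := by
        rw [hy, Real.mul_rpow hℓ.le (by positivity)]
        congr 1
        rw [← Real.rpow_natCast ‖x‖ 2, ← Real.rpow_mul (norm_nonneg _)]
        norm_num
      have hm2q : (m / 2) ^ (q - 1) = m ^ (q - 1) / 2 ^ (q - 1) :=
        Real.div_rpow hm.le (by norm_num) _
      have h3 : y ^ q / ((q - 1) * (m / 2) ^ (q - 1)) = ‖x‖ ^ (2 * q) * C := by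
        rw [hyq, hm2q, hC]
        field_simp
      linarith
    · rw [Set.indicator_of_notMem (by exact h)]
      positivity
  have hnn : ∀ ω, 0 ≤ Set.indicator {ω | m < fbar (X ω)} (fun ω => fbar (X ω) - m) ω := by
    intro ω
    by_cases h : m < fbar (X ω)
    · rw [Set.indicator_of_mem (by exact h)]; linarith
    · rw [Set.indicator_of_notMem (by exact h)]
  have hint : Integrable (fun ω => ‖X ω‖ ^ (2 * q) * C) P := hX_mom.mul_const C
  calc (∫ ω, Set.indicator {ω | m < fbar (X ω)} (fun ω => fbar (X ω) - m) ω ∂P)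
      ≤ ∫ ω, ‖X ω‖ ^ (2 * q) * C ∂P := by
        apply integral_mono_of_nonneg (Filter.Eventually.of_forall hnn) hint
          (Filter.Eventually.of_forall hpt)
    _ = (∫ ω, ‖X ω‖ ^ (2 * q) ∂P) * C := integral_mul_const C _
    _ = (∫ ω, ‖X ω‖ ^ (2 * q) ∂P) * ℓ ^ q * 2 ^ (q - 1) / ((q - 1) * m ^ (q - 1)) := by
        rw [hC]; ring
end
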